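/- Let q ≥ 1 be an integer, α > 0, and n_1, ..., n_q non-negative integers with n = ∑_k n_k > 0. Then the local local BDeu score -log pGam(α, n) + ∑_{k=1}^q log pGam(α/q, n_k) is at most the maximized multinomial log-likelihood ML(n_1,...,n_q) = ∑_{k=1}^q n_k · log(n_k/n), with the convention 0·log 0 = 0. -/

import Mathlib

open Real intervalIntegral MeasureTheory

/-- `pGam α x = Γ(x+α)/Γ(α)`. -/
noncomputable def pGam (α : ℝ) (x : ℕ) : ℝ := Real.Gamma (x + α) / Real.Gamma α

lemma pGam_zero {α : ℝ} (hα : 0 < α) : pGam α 0 = 1 := by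
  simp [pGam, div_self (Real.Gamma_pos_of_pos hα).ne']

lemma pGam_succ {α : ℝ} (hα : 0 < α) (m : ℕ) :
    pGam α (m + 1) = (m + α) * pGam α m := by
  have h : ((m + 1 : ℕ) : ℝ) + α = ((m : ℝ) + α) + 1 := by push_cast; ring
  rw [pGam, h, Real.Gamma_add_one (by positivity), pGam, mul_div_assoc]

lemma pGam_pos {α : ℝ} (hα : 0 < α) (m : ℕ) : 0 < pGam α m := by
  induction m with
  | zero => simp [pGam_zero hα]
  | succ k ih => rw [pGam_succ hα]; positivity

/-- real Beta integral -/
noncomputable def rBeta (x y : ℝ) : ℝ := ∫ t in (0:ℝ)..1, t ^ (x - 1) * (1 - t) ^ (y - 1)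

lemma rBeta_eq (x y : ℝ) (hx : 0 < x) (hy : 0 < y) :
    Real.Gamma x * Real.Gamma y = Real.Gamma (x + y) * rBeta x y := by
  have h := Complex.Gamma_mul_Gamma_eq_betaIntegral (s := x) (t := y)
    (by simpa using hx) (by simpa using hy)
  have hB : Complex.betaIntegral x y = (rBeta x y : ℂ) := by
    rw [Complex.betaIntegral, rBeta, ← intervalIntegral.integral_ofReal]
    refine intervalIntegral.integral_congr fun t ht => ?_
    rw [Set.uIcc_of_le zero_le_one] at ht
    rw [Complex.ofReal_mul, Complex.ofReal_cpow ht.1,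
      Complex.ofReal_cpow (by linarith [ht.2] : (0:ℝ) ≤ 1 - t)]
    push_cast
    ring_nf
  rw [rBeta] at hB
  have := h
  rw [hB] at this
  have h2 : (Complex.Gamma x * Complex.Gamma y) = ((Real.Gamma x * Real.Gamma y : ℝ) : ℂ) := by
    push_cast [← Complex.Gamma_ofReal]; ring
  have h3 : Complex.Gamma (↑x + ↑y) * (↑(rBeta x y) : ℂ)
      = ((Real.Gamma (x + y) * rBeta x y : ℝ) : ℂ) := by
    push_cast [← Complex.Gamma_ofReal]; ring
  rw [rBeta] at h3
  rw [h2, h3] at this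
  exact_mod_cast this

lemma rBeta_integrable {x y : ℝ} (hx : 0 < x) (hy : 0 < y) :
    IntervalIntegrable (fun t : ℝ => t ^ (x - 1) * (1 - t) ^ (y - 1)) volume 0 1 := by
  have h := (Complex.betaIntegral_convergent (u := x) (v := y)
    (by simpa using hx) (by simpa using hy)).norm
  apply h.congr_ae
  rw [Set.uIoc_of_le (zero_le_one' ℝ)]
  filter_upwards [ae_restrict_mem measurableSet_Ioc] with t ht
  rcases eq_or_lt_of_le ht.2 with h1 | h1
  · subst h1
    simp only [norm_mul, sub_self]
    rw [show ((1:ℂ) - ((1:ℝ):ℂ)) = 0 by norm_num,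
      Complex.norm_cpow_eq_rpow_re_of_pos one_pos]
    rcases eq_or_ne y 1 with hy1 | hy1
    · simp [hy1]
    · rw [Complex.zero_cpow (by simpa [sub_eq_zero, Complex.ofReal_eq_one] using hy1),
        Real.zero_rpow (sub_ne_zero.mpr hy1)]
      simp
  · simp only [norm_mul]
    rw [show ((1:ℂ) - (t:ℂ)) = ((1 - t : ℝ) : ℂ) by push_cast; ring,
      Complex.norm_cpow_eq_rpow_re_of_pos ht.1,
      Complex.norm_cpow_eq_rpow_re_of_pos (by linarith : (0:ℝ) < 1 - t)]
    simp

lemma rBeta_pos {x y : ℝ} (hx : 0 < x) (hy : 0 < y) : 0 < rBeta x y := by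
  apply intervalIntegral.intervalIntegral_pos_of_pos_on (rBeta_integrable hx hy)
    (fun t ht => ?_) one_pos
  have h1 : 0 < t := ht.1
  have h2 : 0 < 1 - t := by linarith [ht.2]
  positivity

/-- pointwise AM-GM bound: `t^a (1-t)^b (a+b)^(a+b) ≤ a^a b^b` on `[0,1]` -/
lemma pow_mul_pow_le (a b : ℕ) {t : ℝ} (h0 : 0 ≤ t) (h1 : t ≤ 1) :
    t ^ a * (1 - t) ^ b * ((a + b : ℕ) : ℝ) ^ (a + b)
      ≤ ((a : ℝ) ^ a * (b : ℝ) ^ b) := by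
  have h1t : (0:ℝ) ≤ 1 - t := by linarith
  rcases Nat.eq_zero_or_pos a with ha | ha
  · subst ha
    simp only [pow_zero, one_mul, Nat.zero_add, Nat.cast_zero, zero_add]
    exact mul_le_of_le_one_left (by positivity) (pow_le_one₀ h1t (by linarith))
  rcases Nat.eq_zero_or_pos b with hb | hb
  · subst hb
    simp only [pow_zero, mul_one, Nat.add_zero, Nat.cast_zero]
    exact mul_le_of_le_one_left (by positivity) (pow_le_one₀ h0 h1)
  -- main case a, b > 0
  have hab : (0:ℝ) < (a:ℝ) + b := by positivity
  have key : t ^ ((a:ℝ) / ((a:ℝ) + b)) * (1 - t) ^ ((b:ℝ) / ((a:ℝ) + b))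
      ≤ ((a:ℝ) / ((a:ℝ) + b)) ^ ((a:ℝ) / ((a:ℝ) + b))
        * ((b:ℝ) / ((a:ℝ) + b)) ^ ((b:ℝ) / ((a:ℝ) + b)) := by
    have w1 : (0:ℝ) ≤ (a:ℝ) / ((a:ℝ) + b) := by positivity
    have w2 : (0:ℝ) ≤ (b:ℝ) / ((a:ℝ) + b) := by positivity
    have hw : (a:ℝ) / ((a:ℝ) + b) + (b:ℝ) / ((a:ℝ) + b) = 1 := by
      field_simp
    have hgm := Real.geom_mean_le_arith_mean2_weighted w1 w2
      (p₁ := t / ((a:ℝ) / ((a:ℝ) + b))) (p₂ := (1 - t) / ((b:ℝ) / ((a:ℝ) + b)))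
      (by positivity) (by positivity) hw
    have ha' : (0:ℝ) < (a:ℝ) / ((a:ℝ) + b) := by positivity
    have hb' : (0:ℝ) < (b:ℝ) / ((a:ℝ) + b) := by positivity
    have hgm' : (t / ((a:ℝ)/((a:ℝ)+b))) ^ ((a:ℝ)/((a:ℝ)+b))
        * ((1-t) / ((b:ℝ)/((a:ℝ)+b))) ^ ((b:ℝ)/((a:ℝ)+b)) ≤ 1 := by
      calc _ ≤ (a:ℝ)/((a:ℝ)+b) * (t / ((a:ℝ)/((a:ℝ)+b)))
            + (b:ℝ)/((a:ℝ)+b) * ((1-t) / ((b:ℝ)/((a:ℝ)+b))) := hgm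
        _ = 1 := by field_simp; ring
    calc t ^ ((a:ℝ)/((a:ℝ)+b)) * (1-t) ^ ((b:ℝ)/((a:ℝ)+b))
        = (t / ((a:ℝ)/((a:ℝ)+b))) ^ ((a:ℝ)/((a:ℝ)+b))
          * ((1-t) / ((b:ℝ)/((a:ℝ)+b))) ^ ((b:ℝ)/((a:ℝ)+b))
          * (((a:ℝ)/((a:ℝ)+b)) ^ ((a:ℝ)/((a:ℝ)+b))
            * ((b:ℝ)/((a:ℝ)+b)) ^ ((b:ℝ)/((a:ℝ)+b))) := by
          rw [Real.div_rpow h0 ha'.le, Real.div_rpow h1t hb'.le]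
          have d1 : ((a:ℝ)/((a:ℝ)+b)) ^ ((a:ℝ)/((a:ℝ)+b)) ≠ 0 :=
            (Real.rpow_pos_of_pos ha' _).ne'
          have d2 : ((b:ℝ)/((a:ℝ)+b)) ^ ((b:ℝ)/((a:ℝ)+b)) ≠ 0 :=
            (Real.rpow_pos_of_pos hb' _).ne'
          field_simp
      _ ≤ 1 * (((a:ℝ)/((a:ℝ)+b)) ^ ((a:ℝ)/((a:ℝ)+b))
            * ((b:ℝ)/((a:ℝ)+b)) ^ ((b:ℝ)/((a:ℝ)+b))) := by
          apply mul_le_mul_of_nonneg_right hgm' (by positivity)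
      _ = _ := one_mul _
  -- raise to the (a+b) power
  have key2 := Real.rpow_le_rpow (by positivity) key (le_of_lt hab)
  rw [Real.mul_rpow (by positivity) (by positivity),
      Real.mul_rpow (by positivity) (by positivity),
      ← Real.rpow_mul h0, ← Real.rpow_mul h1t,
      ← Real.rpow_mul (by positivity), ← Real.rpow_mul (by positivity)] at key2
  have e1 : (a:ℝ) / ((a:ℝ) + b) * ((a:ℝ) + b) = (a:ℝ) := by field_simp
  have e2 : (b:ℝ) / ((a:ℝ) + b) * ((a:ℝ) + b) = (b:ℝ) := by field_simp
  rw [e1, e2, Real.rpow_natCast, Real.rpow_natCast, Real.rpow_natCast,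
    Real.rpow_natCast] at key2
  have hfin : ((a:ℝ)/((a:ℝ)+b)) ^ a * ((b:ℝ)/((a:ℝ)+b)) ^ b * ((a:ℝ)+b) ^ (a+b)
      = (a:ℝ) ^ a * (b:ℝ) ^ b := by
    rw [div_pow, div_pow, pow_add]
    field_simp
  calc t ^ a * (1 - t) ^ b * ((a + b : ℕ) : ℝ) ^ (a + b)
      = (t ^ a * (1 - t) ^ b) * ((a:ℝ) + b) ^ (a + b) := by push_cast; ring
    _ ≤ (((a:ℝ)/((a:ℝ)+b)) ^ a * ((b:ℝ)/((a:ℝ)+b)) ^ b) * ((a:ℝ)+b) ^ (a+b) :=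
        mul_le_mul_of_nonneg_right key2 (by positivity)
    _ = (a:ℝ) ^ a * (b:ℝ) ^ b := hfin

lemma rBeta_mono {β1 β2 : ℝ} (h1 : 0 < β1) (h2 : 0 < β2) (a b : ℕ) :
    rBeta ((a:ℝ) + β1) ((b:ℝ) + β2) * ((a + b : ℕ) : ℝ) ^ (a + b)
      ≤ ((a:ℝ) ^ a * (b:ℝ) ^ b) * rBeta β1 β2 := by
  have hx1 : (0:ℝ) < (a:ℝ) + β1 := by positivity
  have hx2 : (0:ℝ) < (b:ℝ) + β2 := by positivity
  rw [rBeta, rBeta, ← intervalIntegral.integral_mul_const,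
    ← intervalIntegral.integral_const_mul]
  apply intervalIntegral.integral_mono_ae_restrict zero_le_one
    ((rBeta_integrable hx1 hx2).mul_const _)
    ((rBeta_integrable h1 h2).const_mul _)
  have h01 : ∀ᵐ t ∂(volume.restrict (Set.Icc (0:ℝ) 1)), t ∈ Set.Ioo (0:ℝ) 1 := by
    rw [ae_restrict_iff' measurableSet_Icc, ae_iff]
    refine measure_mono_null (fun t ht => ?_) (((Set.finite_singleton (1:ℝ)).insert 0).measure_zero _)
    simp only [Set.mem_setOf_eq, not_forall, exists_prop, Set.mem_Icc, Set.mem_Ioo,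
      not_and_or, not_lt] at ht
    obtain ⟨⟨hl, hr⟩, hbad⟩ := ht
    rcases hbad with h | h
    · exact Set.mem_insert_iff.mpr (Or.inl (le_antisymm h hl))
    · exact Set.mem_insert_iff.mpr (Or.inr (by simp [le_antisymm hr h]))
  filter_upwards [h01] with t ht
  have ht0 : 0 < t := ht.1
  have ht1 : 0 < 1 - t := by linarith [ht.2]
  have e1 : t ^ ((a:ℝ) + β1 - 1) = t ^ a * t ^ (β1 - 1) := by
    rw [show (a:ℝ) + β1 - 1 = (a:ℝ) + (β1 - 1) by ring, Real.rpow_add ht0,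
      Real.rpow_natCast]
  have e2 : (1 - t) ^ ((b:ℝ) + β2 - 1) = (1 - t) ^ b * (1 - t) ^ (β2 - 1) := by
    rw [show (b:ℝ) + β2 - 1 = (b:ℝ) + (β2 - 1) by ring, Real.rpow_add ht1,
      Real.rpow_natCast]
  rw [e1, e2]
  have hw : (0:ℝ) ≤ t ^ (β1 - 1) * (1 - t) ^ (β2 - 1) := by positivity
  calc t ^ a * t ^ (β1-1) * ((1-t) ^ b * (1-t) ^ (β2-1)) * ((a+b:ℕ):ℝ) ^ (a+b)
      = (t ^ a * (1-t) ^ b * ((a+b:ℕ):ℝ) ^ (a+b)) * (t ^ (β1-1) * (1-t) ^ (β2-1)) := by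
        ring
    _ ≤ ((a:ℝ) ^ a * (b:ℝ) ^ b) * (t ^ (β1-1) * (1-t) ^ (β2-1)) :=
        mul_le_mul_of_nonneg_right (pow_mul_pow_le a b ht0.le (by linarith [ht.2])) hw

lemma two_cat {β1 β2 : ℝ} (h1 : 0 < β1) (h2 : 0 < β2) (a b : ℕ) :
    pGam β1 a * pGam β2 b * ((a + b : ℕ) : ℝ) ^ (a + b)
      ≤ pGam (β1 + β2) (a + b) * ((a:ℝ) ^ a * (b:ℝ) ^ b) := by
  have hx1 : (0:ℝ) < (a:ℝ) + β1 := by positivity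
  have hx2 : (0:ℝ) < (b:ℝ) + β2 := by positivity
  have hB0 : 0 < rBeta β1 β2 := rBeta_pos h1 h2
  have hG1 : 0 < Real.Gamma β1 := Real.Gamma_pos_of_pos h1
  have hG2 : 0 < Real.Gamma β2 := Real.Gamma_pos_of_pos h2
  have hGs : 0 < Real.Gamma (β1 + β2) := Real.Gamma_pos_of_pos (by positivity)
  have key : pGam β1 a * pGam β2 b
      = pGam (β1 + β2) (a + b) * (rBeta ((a:ℝ) + β1) ((b:ℝ) + β2) / rBeta β1 β2) := by
    have e1 := rBeta_eq _ _ hx1 hx2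
    have e2 := rBeta_eq _ _ h1 h2
    have hc : ((a:ℝ) + β1) + ((b:ℝ) + β2) = ((a + b : ℕ) : ℝ) + (β1 + β2) := by
      push_cast; ring
    rw [hc] at e1
    rw [pGam, pGam, pGam, div_mul_div_comm, e1, e2]
    field_simp
  rw [key]
  have h := rBeta_mono h1 h2 a b
  have hp := (pGam_pos (show (0:ℝ) < β1 + β2 by positivity) (a + b)).le
  calc pGam (β1+β2) (a+b) * (rBeta ((a:ℝ)+β1) ((b:ℝ)+β2) / rBeta β1 β2) * ((a+b:ℕ):ℝ)^(a+b)
      = pGam (β1+β2) (a+b)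
        * ((rBeta ((a:ℝ)+β1) ((b:ℝ)+β2) * ((a+b:ℕ):ℝ)^(a+b)) / rBeta β1 β2) := by
        ring
    _ ≤ pGam (β1+β2) (a+b) * (((a:ℝ)^a * (b:ℝ)^b * rBeta β1 β2) / rBeta β1 β2) := by
        gcongr
    _ = pGam (β1+β2) (a+b) * ((a:ℝ)^a*(b:ℝ)^b) := by
        rw [mul_div_assoc, div_self hB0.ne', mul_one]

lemma nat_self_pow_pos (m : ℕ) : (0:ℝ) < (m:ℝ) ^ m := by
  cases m with
  | zero => simp
  | succ k => positivity

lemma prod_bound (β : ℝ) (hβ : 0 < β) (q : ℕ) (hq : 1 ≤ q) (n : ℕ → ℕ) :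
    (∏ k ∈ Finset.range q, pGam β (n k))
        * ((∑ k ∈ Finset.range q, n k : ℕ) : ℝ) ^ (∑ k ∈ Finset.range q, n k)
      ≤ pGam ((q:ℝ) * β) (∑ k ∈ Finset.range q, n k)
        * ∏ k ∈ Finset.range q, ((n k : ℝ)) ^ (n k) := by
  induction q with
  | zero => omega
  | succ q ih =>
    rcases Nat.eq_zero_or_pos q with rfl | hq1
    · simp
    have IH := ih hq1
    set M := ∑ k ∈ Finset.range q, n k with hM
    set P := ∏ k ∈ Finset.range q, ((n k : ℝ)) ^ (n k) with hP
    have hPpos : 0 < P := Finset.prod_pos fun k _ => nat_self_pow_pos _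
    have hMpos : (0:ℝ) < (M:ℝ) ^ M := nat_self_pow_pos _
    rw [Finset.sum_range_succ, Finset.prod_range_succ, Finset.prod_range_succ]
    have htc := two_cat (β1 := (q:ℝ) * β) (β2 := β) (by positivity) hβ M (n q)
    have hcast : (q:ℝ) * β + β = ((q+1 : ℕ):ℝ) * β := by push_cast; ring
    rw [hcast] at htc
    have step1 : (∏ k ∈ Finset.range q, pGam β (n k)) * pGam β (n q)
          * ((M + n q : ℕ) : ℝ) ^ (M + n q) * ((M:ℝ) ^ M)
        ≤ (pGam ((q:ℝ) * β) M * P) * pGam β (n q) * ((M + n q : ℕ) : ℝ) ^ (M + n q) := by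
      have := mul_le_mul_of_nonneg_right IH
        (mul_nonneg (pGam_pos hβ (n q)).le (by positivity :
          (0:ℝ) ≤ ((M + n q : ℕ) : ℝ) ^ (M + n q)))
      calc (∏ k ∈ Finset.range q, pGam β (n k)) * pGam β (n q)
            * ((M + n q : ℕ) : ℝ) ^ (M + n q) * ((M:ℝ) ^ M)
          = (∏ k ∈ Finset.range q, pGam β (n k)) * ((M:ℝ) ^ M)
            * (pGam β (n q) * ((M + n q : ℕ) : ℝ) ^ (M + n q)) := by ring
        _ ≤ pGam ((q:ℝ) * β) M * P
            * (pGam β (n q) * ((M + n q : ℕ) : ℝ) ^ (M + n q)) := this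
        _ = (pGam ((q:ℝ) * β) M * P) * pGam β (n q)
            * ((M + n q : ℕ) : ℝ) ^ (M + n q) := by ring
    have step2 : (pGam ((q:ℝ) * β) M * P) * pGam β (n q)
          * ((M + n q : ℕ) : ℝ) ^ (M + n q)
        ≤ pGam (((q+1:ℕ):ℝ) * β) (M + n q) * ((M:ℝ) ^ M * ((n q : ℝ)) ^ (n q)) * P := by
      have := mul_le_mul_of_nonneg_right htc hPpos.le
      calc (pGam ((q:ℝ) * β) M * P) * pGam β (n q) * ((M + n q : ℕ) : ℝ) ^ (M + n q)
          = pGam ((q:ℝ) * β) M * pGam β (n q) * ((M + n q : ℕ) : ℝ) ^ (M + n q) * P := by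
            ring
        _ ≤ pGam (((q+1:ℕ):ℝ) * β) (M + n q) * ((M:ℝ) ^ M * ((n q : ℝ)) ^ (n q)) * P :=
            this
    have comb := step1.trans step2
    have goal' : ((∏ k ∈ Finset.range q, pGam β (n k)) * pGam β (n q)
          * ((M + n q : ℕ) : ℝ) ^ (M + n q)) * ((M:ℝ) ^ M)
        ≤ (pGam (((q+1:ℕ):ℝ) * β) (M + n q) * (P * ((n q : ℝ)) ^ (n q))) * ((M:ℝ) ^ M) := by
      calc _ ≤ pGam (((q+1:ℕ):ℝ) * β) (M + n q) * ((M:ℝ) ^ M * ((n q : ℝ)) ^ (n q)) * P :=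
            comb
        _ = (pGam (((q+1:ℕ):ℝ) * β) (M + n q) * (P * ((n q : ℝ)) ^ (n q))) * ((M:ℝ) ^ M) := by
            ring
    exact le_of_mul_le_mul_right goal' hMpos

theorem stmt_10 (q : ℕ) (hq : 1 ≤ q) (α : ℝ) (hα : 0 < α) (n : ℕ → ℕ)
    (hN : 0 < ∑ k ∈ Finset.range q, n k) :
    -Real.log (pGam α (∑ k ∈ Finset.range q, n k)) +
        ∑ k ∈ Finset.range q, Real.log (pGam (α / q) (n k))
      ≤ ∑ k ∈ Finset.range q,
          (n k : ℝ) * Real.log ((n k : ℝ) / ((∑ l ∈ Finset.range q, n l : ℕ) : ℝ)) := by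
  have hq0 : (0:ℝ) < (q:ℝ) := by exact_mod_cast hq
  have hβ : 0 < α / q := by positivity
  set N : ℕ := ∑ k ∈ Finset.range q, n k with hNdef
  have hNR : (0:ℝ) < (N:ℝ) := by exact_mod_cast hN
  have key := prod_bound (α / q) hβ q hq n
  rw [show (q:ℝ) * (α / q) = α by field_simp] at key
  rw [← hNdef] at key
  -- positivity facts
  have hprod_pos : 0 < ∏ k ∈ Finset.range q, pGam (α / q) (n k) :=
    Finset.prod_pos fun k _ => pGam_pos hβ _
  have hL_pos : 0 < (∏ k ∈ Finset.range q, pGam (α / q) (n k)) * ((N:ℕ):ℝ) ^ N :=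
    mul_pos hprod_pos (nat_self_pow_pos N)
  have hlog := Real.log_le_log hL_pos key
  rw [Real.log_mul hprod_pos.ne' (nat_self_pow_pos N).ne',
    Real.log_mul (pGam_pos hα N).ne'
      (Finset.prod_pos fun k _ => nat_self_pow_pos (n k)).ne',
    Real.log_prod (fun k _ => (pGam_pos hβ (n k)).ne'),
    Real.log_prod (fun k _ => (nat_self_pow_pos (n k)).ne'),
    Real.log_pow] at hlog
  simp only [Real.log_pow] at hlog
  -- rewrite RHS of the goal
  have hRHS : ∑ k ∈ Finset.range q, (n k : ℝ) * Real.log ((n k : ℝ) / ((N:ℕ):ℝ))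
      = (∑ k ∈ Finset.range q, (n k : ℝ) * Real.log (n k)) - (N:ℝ) * Real.log N := by
    have : ∀ k ∈ Finset.range q, (n k : ℝ) * Real.log ((n k : ℝ) / ((N:ℕ):ℝ))
        = (n k : ℝ) * Real.log (n k) - (n k : ℝ) * Real.log N := by
      intro k _
      rcases Nat.eq_zero_or_pos (n k) with h | h
      · simp [h]
      · rw [Real.log_div (by exact_mod_cast h.ne') hNR.ne']
        ring
    rw [Finset.sum_congr rfl this, Finset.sum_sub_distrib, ← Finset.sum_mul]
    congr 1
    rw [hNdef]
    push_cast
    ring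
  rw [hRHS]
  have hNlog : ∑ k ∈ Finset.range q, Real.log (pGam (α / q) (n k)) + (N:ℝ) * Real.log N
      ≤ Real.log (pGam α N) + ∑ k ∈ Finset.range q, (n k : ℝ) * Real.log (n k) := by
    convert hlog using 2
  linarith
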